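/- Let S = S(c,r) be a sphere in Euclidean 3-space with r > 0, let Π be a plane, o ∈ Π a point and ρ > 0, and suppose the circle Π ∩ S(o,ρ) is contained in S. Then every line L with L ⊆ Π such that the distance from o to L equals ρ (i.e., L is tangent in Π to this circle) is tangent to the sphere S, i.e., the distance from c to L equals r. -/

import Mathlib

noncomputable section

/-- Euclidean 3-space. -/
abbrev E3 : Type := EuclideanSpace ℝ (Fin 3)

/-- A line in `ℝ³`: a 1-dimensional affine subspace. -/
def IsLine (L : AffineSubspace ℝ E3) : Prop := Module.finrank ℝ L.direction = 1

/-- A plane in `ℝ³`: a 2-dimensional affine subspace. -/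
def IsPlane (P : AffineSubspace ℝ E3) : Prop := Module.finrank ℝ P.direction = 2

/-- A line is tangent to the sphere with centre `c` and radius `r` if the distance
from `c` to the line equals `r`. -/
def Tangent (c : E3) (r : ℝ) (L : AffineSubspace ℝ E3) : Prop :=
  Metric.infDist c (L : Set E3) = r

/-- A line `L` meets a line `ℓ` if they have a common point. -/
def Meets (L ℓ : AffineSubspace ℝ E3) : Prop :=
  ((L : Set E3) ∩ (ℓ : Set E3)).Nonempty

/-- If `x -ᵥ q` is orthogonal to the direction of `L` and `q ∈ L`, then the distance
from `x` to `L` equals `dist x q`. -/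
lemma infDist_eq_dist_of_perp {L : AffineSubspace ℝ E3} {x q : E3} (hq : q ∈ L)
    (hperp : ∀ v ∈ L.direction, inner ℝ (x -ᵥ q) v = (0 : ℝ)) :
    Metric.infDist x (L : Set E3) = dist x q := by
  haveI : Nonempty (L : Set E3) := ⟨⟨q, hq⟩⟩
  refine le_antisymm (Metric.infDist_le_dist_of_mem hq) ?_
  rw [Metric.infDist_eq_iInf]
  refine le_ciInf fun ⟨y, hy⟩ => ?_
  have hyq : y -ᵥ q ∈ L.direction := AffineSubspace.vsub_mem_direction hy hq
  have hiz : inner ℝ (x -ᵥ q) (y -ᵥ q) = (0 : ℝ) := hperp _ hyq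
  have hxy : x -ᵥ y = (x -ᵥ q) - (y -ᵥ q) := by
    rw [vsub_sub_vsub_cancel_right]
  have h1 : dist x y ^ 2 = dist x q ^ 2 + ‖y -ᵥ q‖ ^ 2 := by
    rw [dist_eq_norm_vsub E3, dist_eq_norm_vsub E3, hxy,
      @norm_sub_sq_real E3, hiz]
    ring
  have h2 : (0:ℝ) ≤ dist x y := dist_nonneg
  have h3 : (0:ℝ) ≤ dist x q := dist_nonneg
  nlinarith [sq_nonneg (‖y -ᵥ q‖)]

/-- If a sphere `S(c,r)` contains the circle cut out on the plane `P` by the sphere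
`S(o,ρ)` with `o ∈ P`, then every line of `P` tangent to this circle is tangent to
the sphere `S(c,r)`. -/
theorem tangent_to_circle_tangent_to_sphere
    (c : E3) (r : ℝ) (hr : 0 < r)
    (P : AffineSubspace ℝ E3) (hP : IsPlane P)
    (o : E3) (hoP : o ∈ P) (ρ : ℝ) (hρ : 0 < ρ)
    (hsub : (P : Set E3) ∩ Metric.sphere o ρ ⊆ Metric.sphere c r)
    (L : AffineSubspace ℝ E3) (hL : IsLine L)
    (hLP : (L : Set E3) ⊆ (P : Set E3))
    (hLo : Metric.infDist o (L : Set E3) = ρ) :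
    Metric.infDist c (L : Set E3) = r := by
  -- L is nonempty
  have hLne : (L : Set E3).Nonempty := by
    by_contra h
    rw [Set.not_nonempty_iff_eq_empty, AffineSubspace.coe_eq_bot_iff] at h
    rw [IsLine, h, AffineSubspace.direction_bot] at hL
    simp at hL
  haveI : Nonempty L := hLne.to_subtype
  have hLleP : L ≤ P := hLP
  -- orthogonal projection of o onto L
  set p : E3 := (EuclideanGeometry.orthogonalProjection L o : E3) with hp
  have hpL : p ∈ L := (EuclideanGeometry.orthogonalProjection L o).2
  have hperp_o : ∀ v ∈ L.direction, inner ℝ (o -ᵥ p) v = (0 : ℝ) := fun v hv => by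
    rw [real_inner_comm]
    exact (Submodule.mem_orthogonal _ _).1
      (EuclideanGeometry.vsub_orthogonalProjection_mem_direction_orthogonal L o) v hv
  have hop : dist o p = ρ := by
    rw [← infDist_eq_dist_of_perp hpL hperp_o, hLo]
  -- a unit direction vector of L
  obtain ⟨v, hvL, hvne⟩ : ∃ v ∈ L.direction, v ≠ 0 := by
    by_contra h
    push_neg at h
    have : L.direction = ⊥ := by
      rw [Submodule.eq_bot_iff]; exact h
    rw [IsLine, this] at hL
    simp at hL
  set d : E3 := ‖v‖⁻¹ • v with hd
  have hdL : d ∈ L.direction := L.direction.smul_mem _ hvL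
  have hdnorm : ‖d‖ = 1 := norm_smul_inv_norm hvne
  -- every element of L.direction is a multiple of d
  have hdne : d ≠ 0 := fun h => by simp [h] at hdnorm
  have hspan : ∀ w ∈ L.direction, ∃ t : ℝ, t • d = w := by
    intro w hw
    have := (finrank_eq_one_iff_of_nonzero' (⟨d, hdL⟩ : L.direction)
      (by simpa using hdne)).1 hL ⟨w, hw⟩
    obtain ⟨t, ht⟩ := this
    exact ⟨t, by simpa using congrArg Subtype.val ht⟩
  -- three points on the circle
  have hmem : ∀ x, x ∈ P → dist x o = ρ → dist x c = r := fun x hx1 hx2 =>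
    hsub ⟨hx1, hx2⟩
  set u : E3 := c -ᵥ o with hu
  set w : E3 := p -ᵥ o with hw
  have hwnorm : ‖w‖ = ρ := by
    rw [hw, ← dist_eq_norm_vsub E3, dist_comm]; exact hop
  have hwperp : ∀ x ∈ L.direction, inner ℝ w x = (0 : ℝ) := by
    intro x hx
    have := hperp_o x hx
    have hneg : w = -(o -ᵥ p) := by rw [hw, neg_vsub_eq_vsub_rev]
    rw [hneg, inner_neg_left, this, neg_zero]
  -- point 1 : p
  have h1 : dist p c = r := by
    refine hmem p (hLP hpL) ?_
    rw [dist_comm]; exact hop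
  -- point 2 : (o -ᵥ p) +ᵥ o
  have h2 : dist ((o -ᵥ p) +ᵥ o) c = r := by
    refine hmem _ (AffineSubspace.vadd_mem_of_mem_direction
      (AffineSubspace.vsub_mem_direction hoP (hLP hpL)) hoP) ?_
    rw [dist_eq_norm_vsub E3, vadd_vsub, ← dist_eq_norm_vsub E3]
    exact hop
  -- point 3 : (ρ • d) +ᵥ o
  have h3 : dist ((ρ • d) +ᵥ o) c = r := by
    refine hmem _ (AffineSubspace.vadd_mem_of_mem_direction
      (AffineSubspace.direction_le hLleP (Submodule.smul_mem _ _ hdL)) hoP) ?_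
    rw [dist_eq_norm_vsub E3, vadd_vsub, norm_smul, hdnorm]
    simp [abs_of_pos hρ]
  -- rewrite as norms of vector differences
  have e1 : ‖u - w‖ = r := by
    have : c -ᵥ p = u - w := by rw [hu, hw, vsub_sub_vsub_cancel_right]
    rw [← this, ← dist_eq_norm_vsub E3, dist_comm]; exact h1
  have e2 : ‖u + w‖ = r := by
    have : c -ᵥ ((o -ᵥ p) +ᵥ o) = u + w := by
      rw [hu, hw, vsub_vadd_eq_vsub_sub, sub_eq_add_neg, neg_vsub_eq_vsub_rev]
    rw [← this, ← dist_eq_norm_vsub E3, dist_comm]; exact h2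
  have e3 : ‖u - ρ • d‖ = r := by
    have : c -ᵥ ((ρ • d) +ᵥ o) = u - ρ • d := by
      rw [hu, vsub_vadd_eq_vsub_sub]
    rw [← this, ← dist_eq_norm_vsub E3, dist_comm]; exact h3
  -- inner product computations
  have q1 : ‖u‖ ^ 2 - 2 * inner ℝ u w + ρ ^ 2 = r ^ 2 := by
    have h : ‖u - w‖ ^ 2 = r ^ 2 := by rw [e1]
    rw [@norm_sub_sq_real E3, hwnorm] at h
    linarith [h]
  have q2 : ‖u‖ ^ 2 + 2 * inner ℝ u w + ρ ^ 2 = r ^ 2 := by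
    have h : ‖u + w‖ ^ 2 = r ^ 2 := by rw [e2]
    rw [@norm_add_sq_real E3, hwnorm] at h
    linarith [h]
  have huw : inner ℝ u w = (0 : ℝ) := by linarith
  have hunorm : ‖u‖ ^ 2 + ρ ^ 2 = r ^ 2 := by linarith
  have hud : inner ℝ u d = (0 : ℝ) := by
    have h : ‖u - ρ • d‖ ^ 2 = r ^ 2 := by rw [e3]
    rw [@norm_sub_sq_real E3, norm_smul, hdnorm, real_inner_smul_right] at h
    simp only [mul_one, Real.norm_eq_abs, abs_of_pos hρ] at h
    nlinarith [h, hρ]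
  -- c -ᵥ p is orthogonal to L.direction
  have hcperp : ∀ x ∈ L.direction, inner ℝ (c -ᵥ p) x = (0 : ℝ) := by
    intro x hx
    obtain ⟨t, ht⟩ := hspan x hx
    have hcp : c -ᵥ p = u - w := by rw [hu, hw, vsub_sub_vsub_cancel_right]
    rw [hcp, ← ht, inner_smul_right, inner_sub_left, hud, hwperp d hdL]
    ring
  rw [infDist_eq_dist_of_perp hpL hcperp, dist_comm]
  exact h1
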